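/- Let G be a finite simple graph and let v be a vertex of G that is not a leaf (the degree of v in G is not equal to one). Let G − v denote the induced subgraph of G on the vertices other than v. Then γ_cer(G) ≤ γ_cer(G − v) + 1. (Equivalently: adding a non-leaf vertex to a graph increases the certified domination number by at most one.) -/

import Mathlib

open Finset

variable {V : Type*} [Fintype V] [DecidableEq V]

/-- `D` is a dominating set of `G`: every vertex outside `D` has a neighbour in `D`. -/
def IsDomSet (G : SimpleGraph V) (D : Finset V) : Prop :=
  ∀ v ∉ D, ∃ u ∈ D, G.Adj u v

/-- `D` is a certified dominating set of `G`: it is dominating and every vertex of `D`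
has either zero or at least two neighbours outside `D`. -/
def IsCertDomSet (G : SimpleGraph V) [DecidableRel G.Adj] (D : Finset V) : Prop :=
  IsDomSet G D ∧ ∀ v ∈ D, (G.neighborFinset v \ D).card = 0 ∨ 2 ≤ (G.neighborFinset v \ D).card

/-- The domination number: minimum cardinality of a dominating set. -/
noncomputable def gamma (G : SimpleGraph V) : ℕ :=
  sInf {n | ∃ D : Finset V, IsDomSet G D ∧ D.card = n}

/-- The certified domination number: minimum cardinality of a certified dominating set. -/
noncomputable def gammaCer (G : SimpleGraph V) [DecidableRel G.Adj] : ℕ :=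
  sInf {n | ∃ D : Finset V, IsCertDomSet G D ∧ D.card = n}

/-- A leaf is a vertex of degree one. -/
abbrev IsLeaf (G : SimpleGraph V) [DecidableRel G.Adj] (v : V) : Prop := G.degree v = 1

/-- The set of leaf-neighbours of a vertex. -/
abbrev leafNbrs (G : SimpleGraph V) [DecidableRel G.Adj] (v : V) : Finset V :=
  (G.neighborFinset v).filter (fun l => G.degree l = 1)

/-- A weak support is a vertex adjacent to exactly one leaf. -/
abbrev IsWeakSupport (G : SimpleGraph V) [DecidableRel G.Adj] (v : V) : Prop :=
  (leafNbrs G v).card = 1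

/-- A strong support is a vertex adjacent to at least two leaves. -/
abbrev IsStrongSupport (G : SimpleGraph V) [DecidableRel G.Adj] (v : V) : Prop :=
  2 ≤ (leafNbrs G v).card

set_option linter.unusedSectionVars false
set_option linter.unusedVariables false

namespace CertDel

/-- Restriction of a graph to a finset: edges with both ends in `S`. -/
def restrictG (G : SimpleGraph V) (S : Finset V) : SimpleGraph V where
  Adj x y := G.Adj x y ∧ x ∈ S ∧ y ∈ S
  symm := ⟨by rintro x y ⟨h, hx, hy⟩; exact ⟨h.symm, hy, hx⟩⟩
  loopless := ⟨by rintro x ⟨h, _, _⟩; exact G.loopless.irrefl x h⟩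

instance (G : SimpleGraph V) [DecidableRel G.Adj] (S : Finset V) :
    DecidableRel (restrictG G S).Adj := fun x y =>
  inferInstanceAs (Decidable (G.Adj x y ∧ x ∈ S ∧ y ∈ S))

variable (Γ : SimpleGraph V) [DecidableRel Γ.Adj] (v : V)

/-- A "leaf": degree-one vertex different from `v`. -/
def Lf (l : V) : Prop := Γ.degree l = 1 ∧ l ≠ v

/-- A support: neighbour of a leaf. -/
def Supp (s : V) : Prop := ∃ l, Lf Γ v l ∧ Γ.Adj s l

/-- number of `A`-neighbours. -/
def ct (A : Finset V) (x : V) : ℕ := (Γ.neighborFinset x ∩ A).card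

variable {Γ v}

lemma leaf_nbr_eq {l s t : V} (hl : Γ.degree l = 1) (hs : Γ.Adj s l) (ht : Γ.Adj t l) :
    s = t := by
  obtain ⟨a, ha⟩ := Finset.card_eq_one.mp hl
  have h1 : s ∈ Γ.neighborFinset l := by simpa [SimpleGraph.mem_neighborFinset] using hs.symm
  have h2 : t ∈ Γ.neighborFinset l := by simpa [SimpleGraph.mem_neighborFinset] using ht.symm
  rw [ha, Finset.mem_singleton] at h1 h2
  rw [h1, h2]

lemma ct_le_degree (A : Finset V) (x : V) : ct Γ A x ≤ Γ.degree x :=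
  Finset.card_le_card inter_subset_left

lemma ct_mono {A B : Finset V} (h : A ⊆ B) (x : V) : ct Γ A x ≤ ct Γ B x :=
  Finset.card_le_card (inter_subset_inter_left h)

lemma ct_insert {A : Finset V} {x y : V} (hxy : Γ.Adj x y) (hy : y ∉ A) :
    ct Γ (insert y A) x = ct Γ A x + 1 := by
  unfold ct
  have : Γ.neighborFinset x ∩ insert y A = insert y (Γ.neighborFinset x ∩ A) := by
    ext z
    simp only [mem_inter, mem_insert, SimpleGraph.mem_neighborFinset]
    constructor
    · rintro ⟨hz, hz' | hz'⟩
      · exact Or.inl hz'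
      · exact Or.inr ⟨hz, hz'⟩
    · rintro (rfl | ⟨hz, hz'⟩)
      · exact ⟨hxy, Or.inl rfl⟩
      · exact ⟨hz, Or.inr hz'⟩
  rw [this, Finset.card_insert_of_notMem (fun hc => hy (mem_inter.mp hc).2)]

/-- The invariant of the exposure process. -/
structure Inv (A M : Finset V) : Prop where
  disj : ∀ x ∈ M, x ∉ A
  supp : ∀ s, Supp Γ v s → s ∈ M
  vmem : v ∈ M ∨ v ∈ A
  wit : ∀ a ∈ A, ∃ b ∈ M, Γ.Adj a b
  vdom : v ∉ A → ∃ w ∈ A, Γ.Adj v w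
  leaffree : ∀ s ∈ M, s ≠ v → Supp Γ v s →
      (∀ l, Lf Γ v l → Γ.Adj s l → l ∉ A) ∨ 2 ≤ ct Γ A s
  mother : ∀ m ∈ M, m ≠ v → ¬ Supp Γ v m → 2 ≤ ct Γ A m

end CertDel

namespace CertDel2
open CertDel

variable {Γ : SimpleGraph V} [DecidableRel Γ.Adj] {v : V}

lemma not_leaf_of_violator {A M : Finset V} (inv : Inv (Γ := Γ) (v := v) A M)
    {k : V} (hct : ct Γ A k = 1) : ¬ Lf Γ v k := by
  rintro ⟨hdeg, hkv⟩
  obtain ⟨a, ha⟩ := Finset.card_eq_one.mp hdeg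
  have hak : Γ.Adj a k := by
    have : a ∈ Γ.neighborFinset k := ha ▸ Finset.mem_singleton_self a
    exact (SimpleGraph.mem_neighborFinset _ _ _).mp this |>.symm
  have haA : a ∈ A := by
    by_contra haA
    have : Γ.neighborFinset k ∩ A = ∅ := by
      rw [ha]; ext x; simp only [mem_inter, mem_singleton, notMem_empty, iff_false]
      rintro ⟨rfl, hx⟩; exact haA hx
    rw [ct, this] at hct; simp at hct
  have : Supp Γ v a := ⟨k, ⟨hdeg, hkv⟩, hak⟩
  exact inv.disj a (inv.supp a this) haA

lemma no_helper_facts {A M : Finset V} (inv : Inv (Γ := Γ) (v := v) A M)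
    {k : V} (hkA : k ∉ A) (hkv : k ≠ v) (hct : ct Γ A k = 1)
    (hnh : ∀ y, Γ.Adj k y → y ∈ A ∨ y ∈ M) :
    k ∉ M ∧ ∃ b ∈ M, Γ.Adj k b ∧ b ∉ A := by
  have hnl : ¬ Lf Γ v k := not_leaf_of_violator inv hct
  -- there is a neighbour of k outside A
  have hex : ∃ b, Γ.Adj k b ∧ b ∉ A := by
    by_contra h
    push_neg at h
    have hsub : Γ.neighborFinset k ⊆ A := by
      intro x hx; exact h x ((SimpleGraph.mem_neighborFinset _ _ _).mp hx)
    have : ct Γ A k = Γ.degree k := by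
      unfold ct; rw [Finset.inter_eq_left.mpr hsub]; rfl
    exact hnl ⟨by rw [← this, hct], hkv⟩
  obtain ⟨b, hkb, hbA⟩ := hex
  have hbM : b ∈ M := (hnh b hkb).resolve_left hbA
  refine ⟨?_, b, hbM, hkb, hbA⟩
  intro hkM
  by_cases hsp : Supp Γ v k
  · rcases inv.leaffree k hkM hkv hsp with hall | h2
    · obtain ⟨l, hlf, hkl⟩ := hsp
      have hlA : l ∉ A := hall l hlf hkl
      have hlM : l ∈ M := (hnh l hkl).resolve_left hlA
      by_cases hsl : Supp Γ v l
      · -- l is a support: its leaf must be k, so k is a leaf: contradiction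
        obtain ⟨l', hl'f, hll'⟩ := hsl
        have : l' = k := leaf_nbr_eq hlf.1 hll'.symm hkl
        exact hnl (this ▸ hl'f)
      · have h2 := inv.mother l hlM hlf.2 hsl
        have h3 := ct_le_degree (Γ := Γ) A l
        rw [hlf.1] at h3
        omega
    · omega
  · have := inv.mother k hkM hkv hsp
    omega

end CertDel2

namespace CertDel2
open CertDel

lemma run {Γ : SimpleGraph V} [DecidableRel Γ.Adj] {v : V} (n : ℕ) :
    ∀ A M : Finset V, Inv (Γ := Γ) (v := v) A M → (univ \ A).card ≤ n →
    ∃ B N : Finset V, Inv (Γ := Γ) (v := v) B N ∧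
      ∀ k, k ∉ B → k ≠ v → ct Γ B k ≠ 1 := by
  induction n with
  | zero =>
    intro A M inv hcard
    refine ⟨A, M, inv, ?_⟩
    intro k hkA _
    exfalso
    have : k ∈ univ \ A := mem_sdiff.mpr ⟨mem_univ k, hkA⟩
    have h0 : univ \ A = ∅ := Finset.card_eq_zero.mp (Nat.le_zero.mp hcard)
    rw [h0] at this
    exact notMem_empty k this
  | succ n ih =>
    intro A M inv hcard
    by_cases hviol : ∃ k, k ∉ A ∧ k ≠ v ∧ ct Γ A k = 1
    · obtain ⟨k, hkA, hkv, hct⟩ := hviol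
      by_cases hhelp : ∃ y, Γ.Adj k y ∧ y ∉ A ∧ y ∉ M
      · -- mode 1 : expose the helper y, mark k as a mother
        obtain ⟨y, hky, hyA, hyM⟩ := hhelp
        have hky' : k ≠ y := Γ.ne_of_adj hky
        have hct2 : ct Γ (insert y A) k = 2 := by rw [ct_insert hky hyA, hct]
        have inv' : Inv (Γ := Γ) (v := v) (insert y A) (insert k M) := by
          constructor
          · intro x hx
            rcases mem_insert.mp hx with rfl | hxM
            · intro hc
              rcases mem_insert.mp hc with h | h
              · exact hky' h
              · exact hkA h
            · intro hc
              rcases mem_insert.mp hc with rfl | h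
              · exact hyM hxM
              · exact inv.disj x hxM h
          · intro s hs; exact mem_insert_of_mem (inv.supp s hs)
          · rcases inv.vmem with h | h
            · exact Or.inl (mem_insert_of_mem h)
            · exact Or.inr (mem_insert_of_mem h)
          · intro a ha
            rcases mem_insert.mp ha with rfl | haA
            · exact ⟨k, mem_insert_self _ _, hky.symm⟩
            · obtain ⟨b, hbM, hab⟩ := inv.wit a haA
              exact ⟨b, mem_insert_of_mem hbM, hab⟩
          · intro hv
            have hvA : v ∉ A := fun h => hv (mem_insert_of_mem h)
            obtain ⟨w, hwA, hvw⟩ := inv.vdom hvA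
            exact ⟨w, mem_insert_of_mem hwA, hvw⟩
          · intro s hs hsv hsp
            by_cases hsk : s = k
            · subst hsk
              exact Or.inr (by rw [hct2])
            · have hsM : s ∈ M := (mem_insert.mp hs).resolve_left hsk
              rcases inv.leaffree s hsM hsv hsp with hall | h2
              · refine Or.inl ?_
                intro l hlf hsl hlmem
                rcases mem_insert.mp hlmem with rfl | hlA
                · exact hsk (leaf_nbr_eq hlf.1 hsl hky)
                · exact hall l hlf hsl hlA
              · exact Or.inr (le_trans h2 (ct_mono (subset_insert _ _) s))
          · intro m hm hmv hmsp
            by_cases hmk : m = k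
            · subst hmk; rw [hct2]
            · have hmM : m ∈ M := (mem_insert.mp hm).resolve_left hmk
              exact le_trans (inv.mother m hmM hmv hmsp) (ct_mono (subset_insert _ _) m)
        refine ih (insert y A) (insert k M) inv' ?_
        have hlt : (univ \ insert y A).card < (univ \ A).card := by
          apply Finset.card_lt_card
          rw [Finset.ssubset_iff_of_subset
            (Finset.sdiff_subset_sdiff (Finset.Subset.refl _) (subset_insert _ _))]
          exact ⟨y, mem_sdiff.mpr ⟨mem_univ y, hyA⟩,
            fun hc => (mem_sdiff.mp hc).2 (mem_insert_self _ _)⟩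
        omega
      · -- mode 2 : expose the violator k itself
        push_neg at hhelp
        have hnh : ∀ y, Γ.Adj k y → y ∈ A ∨ y ∈ M := by
          intro y hy
          by_contra h
          push_neg at h
          exact h.2 (hhelp y hy h.1)
        obtain ⟨hkM, b, hbM, hkb, hbA⟩ := no_helper_facts inv hkA hkv hct hnh
        have hnl : ¬ Lf Γ v k := not_leaf_of_violator inv hct
        have inv' : Inv (Γ := Γ) (v := v) (insert k A) M := by
          constructor
          · intro x hxM hc
            rcases mem_insert.mp hc with rfl | h
            · exact hkM hxM
            · exact inv.disj x hxM h
          · exact inv.supp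
          · rcases inv.vmem with h | h
            · exact Or.inl h
            · exact Or.inr (mem_insert_of_mem h)
          · intro a ha
            rcases mem_insert.mp ha with rfl | haA
            · exact ⟨b, hbM, hkb⟩
            · exact inv.wit a haA
          · intro hv
            have hvA : v ∉ A := fun h => hv (mem_insert_of_mem h)
            obtain ⟨w, hwA, hvw⟩ := inv.vdom hvA
            exact ⟨w, mem_insert_of_mem hwA, hvw⟩
          · intro s hs hsv hsp
            rcases inv.leaffree s hs hsv hsp with hall | h2
            · refine Or.inl ?_
              intro l hlf hsl hlmem
              rcases mem_insert.mp hlmem with rfl | hlA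
              · exact hnl hlf
              · exact hall l hlf hsl hlA
            · exact Or.inr (le_trans h2 (ct_mono (subset_insert _ _) s))
          · intro m hm hmv hmsp
            exact le_trans (inv.mother m hm hmv hmsp) (ct_mono (subset_insert _ _) m)
        refine ih (insert k A) M inv' ?_
        have hlt : (univ \ insert k A).card < (univ \ A).card := by
          apply Finset.card_lt_card
          rw [Finset.ssubset_iff_of_subset
            (Finset.sdiff_subset_sdiff (Finset.Subset.refl _) (subset_insert _ _))]
          exact ⟨k, mem_sdiff.mpr ⟨mem_univ k, hkA⟩,
            fun hc => (mem_sdiff.mp hc).2 (mem_insert_self _ _)⟩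
        omega
    · push_neg at hviol
      refine ⟨A, M, inv, ?_⟩
      intro k hkA hkv
      exact hviol k hkA hkv

end CertDel2

namespace CertDel2
open CertDel

lemma init {Γ : SimpleGraph V} [DecidableRel Γ.Adj] {v : V} (hdeg : 0 < Γ.degree v) :
    ∃ A M : Finset V, Inv (Γ := Γ) (v := v) A M := by
  classical
  set SF : Finset V := univ.filter (fun s => Supp Γ v s) with hSF
  have hmemSF : ∀ s, s ∈ SF ↔ Supp Γ v s := by
    intro s; simp [hSF]
  by_cases hw : ∃ w, Γ.Adj v w ∧ ¬ Supp Γ v w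
  · obtain ⟨w, hvw, hwsp⟩ := hw
    have hwv : w ≠ v := fun h => Γ.loopless.irrefl v (h ▸ hvw)
    have hwM : w ∉ insert v SF := by
      intro hc
      rcases mem_insert.mp hc with h | h
      · exact hwv h
      · exact hwsp ((hmemSF w).mp h)
    refine ⟨{w}, insert v SF, ?_⟩
    constructor
    · intro x hx hc
      rw [mem_singleton] at hc
      subst hc; exact hwM hx
    · intro s hs; exact mem_insert_of_mem ((hmemSF s).mpr hs)
    · exact Or.inl (mem_insert_self _ _)
    · intro a ha
      rw [mem_singleton] at ha
      subst ha
      exact ⟨v, mem_insert_self _ _, hvw.symm⟩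
    · intro _; exact ⟨w, mem_singleton_self w, hvw⟩
    · intro s _ hsv _
      refine Or.inl ?_
      intro l hlf hsl hlmem
      rw [mem_singleton] at hlmem
      subst hlmem
      exact hsv (leaf_nbr_eq hlf.1 hsl hvw)
    · intro m hm hmv hmsp
      exfalso
      rcases mem_insert.mp hm with h | h
      · exact hmv h
      · exact hmsp ((hmemSF m).mp h)
  · push_neg at hw
    have hvsp : ¬ Supp Γ v v := by
      rintro ⟨l, hlf, hvl⟩
      obtain ⟨l', hl'f, hll'⟩ := hw l hvl
      have : l' = v := leaf_nbr_eq hlf.1 hll'.symm hvl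
      exact hl'f.2 this
    refine ⟨{v}, SF, ?_⟩
    constructor
    · intro x hx hc
      rw [mem_singleton] at hc
      exact hvsp ((hmemSF v).mp (hc ▸ hx))
    · intro s hs; exact (hmemSF s).mpr hs
    · exact Or.inr (mem_singleton_self v)
    · intro a ha
      rw [mem_singleton] at ha
      rw [ha]
      obtain ⟨w, hwnb⟩ := Finset.card_pos.mp hdeg
      have hvw : Γ.Adj v w := (SimpleGraph.mem_neighborFinset _ _ _).mp hwnb
      exact ⟨w, (hmemSF w).mpr (hw w hvw), hvw⟩
    · intro hv; exact absurd (mem_singleton_self v) hv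
    · intro s _ _ _
      refine Or.inl ?_
      intro l hlf _ hlmem
      rw [mem_singleton] at hlmem
      exact hlf.2 hlmem
    · intro m hm _ hmsp
      exact absurd ((hmemSF m).mp hm) hmsp

/-- The key exposure lemma: in any graph `Γ`, for a vertex `v` of positive degree,
there is a set `B` such that every member of `B` has a neighbour outside `B`
(different from `v` whenever `v ∈ B`), `v` has a `B`-neighbour if `v ∉ B`, and
every non-member other than `v` has a number of `B`-neighbours different from 1. -/
theorem exposure (Γ : SimpleGraph V) [DecidableRel Γ.Adj] (v : V) (hdeg : 0 < Γ.degree v) :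
    ∃ B : Finset V,
      (∀ a ∈ B, ∃ b, Γ.Adj a b ∧ b ∉ B ∧ (v ∈ B → b ≠ v)) ∧
      (v ∉ B → ∃ w ∈ B, Γ.Adj v w) ∧
      (∀ k, k ∉ B → k ≠ v → (Γ.neighborFinset k ∩ B).card ≠ 1) := by
  obtain ⟨A, M, inv⟩ := init (v := v) hdeg
  obtain ⟨B, N, invf, hnoviol⟩ := run (univ \ A).card A M inv (le_refl _)
  refine ⟨B, ?_, invf.vdom, hnoviol⟩
  intro a ha
  obtain ⟨b, hbN, hab⟩ := invf.wit a ha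
  refine ⟨b, hab, invf.disj b hbN, ?_⟩
  intro hvB hbv
  subst hbv
  exact invf.disj b hbN hvB

end CertDel2

namespace CertDel2
open CertDel

lemma build (G : SimpleGraph V) [DecidableRel G.Adj] (v : V) (hv : G.degree v ≠ 1)
    (D' : Finset V) (hvD : v ∉ D')
    (hdom : ∀ x, x ≠ v → x ∉ D' → ∃ d ∈ D', G.Adj d x)
    (hcert : ∀ d ∈ D', (G.neighborFinset d \ insert v D').card = 0 ∨
      2 ≤ (G.neighborFinset d \ insert v D').card) :
    ∃ D : Finset V, IsCertDomSet G D ∧ D.card ≤ D'.card + 1 := by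
  classical
  set Z : Finset V :=
    D'.filter (fun d => (G.neighborFinset d \ insert v D').card = 0) with hZdef
  set U : Finset V := G.neighborFinset v \ D' with hUdef
  have hZsub : Z ⊆ D' := filter_subset _ _
  have hZnbr : ∀ z ∈ Z, G.neighborFinset z ⊆ insert v D' := by
    intro z hz
    have := (mem_filter.mp hz).2
    exact Finset.sdiff_eq_empty_iff_subset.mp (Finset.card_eq_zero.mp this)
  have hUmem : ∀ x, x ∈ U ↔ G.Adj v x ∧ x ∉ D' := by
    intro x; rw [hUdef, mem_sdiff, SimpleGraph.mem_neighborFinset]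
  by_cases hU1 : U.card = 1
  · -- exactly one external neighbour of v
    -- since v is not a leaf, v has a neighbour in D'
    have hNvD' : ∃ d ∈ D', G.Adj v d := by
      by_contra hc
      push_neg at hc
      have : U = G.neighborFinset v := by
        ext x
        rw [hUmem, SimpleGraph.mem_neighborFinset]
        exact ⟨fun h => h.1, fun h => ⟨h, fun hx => hc x hx h⟩⟩
      apply hv
      rw [SimpleGraph.degree, ← this, hU1]
    set W : Finset V := Z.filter (fun z => G.Adj v z) with hWdef
    by_cases hW : W.Nonempty
    · -- hard case: use the exposure lemma on the restriction to Z ∪ {v}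
      set Γ₀ : SimpleGraph V := restrictG G (insert v Z) with hΓdef
      have hΓadj : ∀ x y, Γ₀.Adj x y ↔ G.Adj x y ∧ x ∈ insert v Z ∧ y ∈ insert v Z := by
        intro x y; rw [hΓdef]; exact Iff.rfl
      obtain ⟨w1, hw1⟩ := hW
      have hw1Z : w1 ∈ Z := (mem_filter.mp hw1).1
      have hw1adj : G.Adj v w1 := (mem_filter.mp hw1).2
      have hdegΓ : 0 < Γ₀.degree v := by
        rw [SimpleGraph.degree]
        apply Finset.card_pos.mpr
        refine ⟨w1, (SimpleGraph.mem_neighborFinset _ _ _).mpr ?_⟩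
        exact (hΓadj v w1).mpr ⟨hw1adj, mem_insert_self _ _, mem_insert_of_mem hw1Z⟩
      obtain ⟨B, hwit, hvdom, hct⟩ := exposure Γ₀ v hdegΓ
      have hBsub : ∀ a ∈ B, a ∈ insert v Z := by
        intro a ha
        obtain ⟨b, hab, _⟩ := hwit a ha
        exact ((hΓadj a b).mp hab).2.1
      have hBZ : ∀ a ∈ B, a ≠ v → a ∈ Z := by
        intro a ha hav
        rcases mem_insert.mp (hBsub a ha) with h | h
        · exact absurd h hav
        · exact h
      -- the common part of the two schemes
      set D0 : Finset V := D' \ B with hD0def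
      -- key identity : for kept z in Z, external nbrs w.r.t. the new set are N(z) ∩ B
      have hkey : ∀ (D : Finset V), (D = D0 ∧ v ∈ B) ∨ (D = insert v D0 ∧ v ∉ B) →
          ∀ z ∈ Z, z ∉ B → G.neighborFinset z \ D = G.neighborFinset z ∩ B := by
        rintro D hD z hzZ hzB
        ext x
        rw [mem_sdiff, mem_inter]
        constructor
        · rintro ⟨hxN, hxD⟩
          refine ⟨hxN, ?_⟩
          have hxin : x ∈ insert v D' := hZnbr z hzZ hxN
          rcases hD with ⟨rfl, hvB⟩ | ⟨rfl, hvB⟩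
          · rcases mem_insert.mp hxin with rfl | hxD'
            · exact hvB
            · by_contra hxB
              exact hxD (mem_sdiff.mpr ⟨hxD', hxB⟩)
          · rcases mem_insert.mp hxin with rfl | hxD'
            · exact absurd (mem_insert_self _ _) hxD
            · by_contra hxB
              exact hxD (mem_insert_of_mem (mem_sdiff.mpr ⟨hxD', hxB⟩))
        · rintro ⟨hxN, hxB⟩
          refine ⟨hxN, ?_⟩
          rcases hD with ⟨rfl, hvB⟩ | ⟨rfl, hvB⟩
          · intro hc; exact (mem_sdiff.mp hc).2 hxB
          · intro hc
            rcases mem_insert.mp hc with rfl | hc'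
            · exact hvB hxB
            · exact (mem_sdiff.mp hc').2 hxB
      -- counting identity : N_G(z) ∩ B has the same card as the Γ₀-count
      have hcount : ∀ z, z ∈ insert v Z → G.neighborFinset z ∩ B =
          Γ₀.neighborFinset z ∩ B := by
        intro z hz
        ext x
        rw [mem_inter, mem_inter, SimpleGraph.mem_neighborFinset,
          SimpleGraph.mem_neighborFinset, hΓadj]
        exact ⟨fun ⟨h1, h2⟩ => ⟨⟨h1, hz, hBsub x h2⟩, h2⟩, fun ⟨h1, h2⟩ => ⟨h1.1, h2⟩⟩
      -- certified condition for kept Z vertices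
      have hZcert : ∀ (D : Finset V), (D = D0 ∧ v ∈ B) ∨ (D = insert v D0 ∧ v ∉ B) →
          ∀ z ∈ Z, z ∉ B →
          (G.neighborFinset z \ D).card = 0 ∨ 2 ≤ (G.neighborFinset z \ D).card := by
        intro D hD z hzZ hzB
        rw [hkey D hD z hzZ hzB, hcount z (mem_insert_of_mem hzZ)]
        have hzv : z ≠ v := fun h => hvD (h ▸ hZsub hzZ)
        have := hct z hzB hzv
        omega
      -- certified condition for P vertices (d ∈ D' outside Z)
      have hPcert : ∀ (D : Finset V), D ⊆ insert v D' → ∀ d ∈ D', d ∉ Z →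
          2 ≤ (G.neighborFinset d \ D).card := by
        intro D hDsub d hd hdZ
        have h2 : 2 ≤ (G.neighborFinset d \ insert v D').card := by
          rcases hcert d hd with h | h
          · exact absurd (mem_filter.mpr ⟨hd, h⟩) hdZ
          · exact h
        refine le_trans h2 (Finset.card_le_card ?_)
        exact Finset.sdiff_subset_sdiff (Finset.Subset.refl _) hDsub
      -- domination for exposed vertices and for old outsiders
      have hdomD : ∀ (D : Finset V), (D = D0 ∧ v ∈ B) ∨ (D = insert v D0 ∧ v ∉ B) →
          ∀ x, x ∉ D → ∃ u ∈ D, G.Adj u x := by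
        rintro D hD x hxD
        by_cases hxv : x = v
        · rw [hxv] at hxD ⊢
          rcases hD with ⟨rfl, hvB⟩ | ⟨rfl, hvB⟩
          · obtain ⟨b, hab, hbB, hbv⟩ := hwit v hvB
            have hb : G.Adj v b := ((hΓadj v b).mp hab).1
            have hbvne : b ≠ v := hbv hvB
            have hbZ : b ∈ Z := by
              rcases mem_insert.mp ((hΓadj v b).mp hab).2.2 with h | h
              · exact absurd h hbvne
              · exact h
            exact ⟨b, mem_sdiff.mpr ⟨hZsub hbZ, hbB⟩, hb.symm⟩
          · exact absurd (mem_insert_self _ _) hxD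
        · by_cases hxB : x ∈ B
          · obtain ⟨b, hab, hbB, hbv⟩ := hwit x hxB
            have hb : G.Adj x b := ((hΓadj x b).mp hab).1
            have hbS : b ∈ insert v Z := ((hΓadj x b).mp hab).2.2
            rcases hD with ⟨rfl, hvB⟩ | ⟨rfl, hvB⟩
            · have hbvne : b ≠ v := hbv hvB
              have hbZ : b ∈ Z := by
                rcases mem_insert.mp hbS with h | h
                · exact absurd h hbvne
                · exact h
              exact ⟨b, mem_sdiff.mpr ⟨hZsub hbZ, hbB⟩, hb.symm⟩
            · rcases mem_insert.mp hbS with h | h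
              · subst h
                exact ⟨b, mem_insert_self _ _, hb.symm⟩
              · exact ⟨b, mem_insert_of_mem (mem_sdiff.mpr ⟨hZsub h, hbB⟩), hb.symm⟩
          · -- x outside D', not exposed
            have hxD' : x ∉ D' := by
              intro hxD'
              apply hxD
              rcases hD with ⟨rfl, _⟩ | ⟨rfl, _⟩
              · exact mem_sdiff.mpr ⟨hxD', hxB⟩
              · exact mem_insert_of_mem (mem_sdiff.mpr ⟨hxD', hxB⟩)
            obtain ⟨d, hd, hdx⟩ := hdom x hxv hxD'
            have hdB : d ∉ B := by
              intro hdB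
              have hdv : d ≠ v := fun h => hvD (h ▸ hd)
              have hdZ : d ∈ Z := hBZ d hdB hdv
              have : x ∈ insert v D' := hZnbr d hdZ
                ((SimpleGraph.mem_neighborFinset _ _ _).mpr hdx)
              rcases mem_insert.mp this with h | h
              · exact hxv h
              · exact hxD' h
            refine ⟨d, ?_, hdx⟩
            rcases hD with ⟨rfl, _⟩ | ⟨rfl, _⟩
            · exact mem_sdiff.mpr ⟨hd, hdB⟩
            · exact mem_insert_of_mem (mem_sdiff.mpr ⟨hd, hdB⟩)
      by_cases hvB : v ∈ B
      · -- scheme II : v stays outside, D = D' \ B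
        refine ⟨D0, ⟨hdomD D0 (Or.inl ⟨rfl, hvB⟩), ?_⟩, ?_⟩
        · intro d hd
          have hd' : d ∈ D' := (mem_sdiff.mp hd).1
          have hdB : d ∉ B := (mem_sdiff.mp hd).2
          by_cases hdZ : d ∈ Z
          · exact hZcert D0 (Or.inl ⟨rfl, hvB⟩) d hdZ hdB
          · refine Or.inr (hPcert D0 ?_ d hd' hdZ)
            exact subset_trans sdiff_subset (subset_insert _ _)
        · exact le_trans (Finset.card_le_card sdiff_subset) (Nat.le_succ _)
      · -- scheme I : v goes in, D = insert v (D' \ B)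
        refine ⟨insert v D0, ⟨hdomD _ (Or.inr ⟨rfl, hvB⟩), ?_⟩, ?_⟩
        · intro d hd
          rcases mem_insert.mp hd with hdv | hd0
          · -- certified condition at v
            rw [hdv]
            refine Or.inr ?_
            obtain ⟨u, hu⟩ := Finset.card_eq_one.mp hU1
            obtain ⟨w0, hw0B, hw0adj⟩ := hvdom hvB
            have hw0 : G.Adj v w0 := ((hΓadj v w0).mp hw0adj).1
            have hw0v : w0 ≠ v := fun h => G.loopless.irrefl v (h ▸ hw0)
            have hw0Z : w0 ∈ Z := hBZ w0 hw0B hw0v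
            have huU : u ∈ U := hu ▸ mem_singleton_self u
            have huadj : G.Adj v u := ((hUmem u).mp huU).1
            have huD' : u ∉ D' := ((hUmem u).mp huU).2
            have hne : u ≠ w0 := fun h => huD' (h ▸ hZsub hw0Z)
            have hsub : {u, w0} ⊆ G.neighborFinset v \ insert v D0 := by
              intro x hx
              rcases mem_insert.mp hx with rfl | hx
              · rw [mem_sdiff, SimpleGraph.mem_neighborFinset]
                refine ⟨huadj, ?_⟩
                intro hc
                rcases mem_insert.mp hc with h | h
                · exact (G.ne_of_adj huadj).symm h
                · exact huD' (mem_sdiff.mp h).1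
              · rw [mem_singleton] at hx
                subst hx
                rw [mem_sdiff, SimpleGraph.mem_neighborFinset]
                refine ⟨hw0, ?_⟩
                intro hc
                rcases mem_insert.mp hc with h | h
                · exact hw0v h
                · exact (mem_sdiff.mp h).2 hw0B
            calc 2 = ({u, w0} : Finset V).card := (Finset.card_pair hne).symm
              _ ≤ _ := Finset.card_le_card hsub
          · have hd' : d ∈ D' := (mem_sdiff.mp hd0).1
            have hdB : d ∉ B := (mem_sdiff.mp hd0).2
            by_cases hdZ : d ∈ Z
            · exact hZcert _ (Or.inr ⟨rfl, hvB⟩) d hdZ hdB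
            · refine Or.inr (hPcert _ ?_ d hd' hdZ)
              exact insert_subset_insert _ sdiff_subset
        · calc (insert v D0).card ≤ D0.card + 1 := Finset.card_insert_le _ _
            _ ≤ D'.card + 1 := by
              have : D0.card ≤ D'.card := Finset.card_le_card sdiff_subset
              omega
    · -- W empty : D' itself works
      rw [Finset.not_nonempty_iff_eq_empty] at hW
      refine ⟨D', ⟨?_, ?_⟩, Nat.le_succ _⟩
      · intro x hxD
        by_cases hxv : x = v
        · subst hxv
          obtain ⟨d, hd, hdadj⟩ := hNvD'
          exact ⟨d, hd, hdadj.symm⟩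
        · exact hdom x hxv hxD
      · intro d hd
        rcases hcert d hd with h | h
        · -- d ∈ Z ; since W = ∅, v is not adjacent to d
          refine Or.inl ?_
          have hdZ : d ∈ Z := mem_filter.mpr ⟨hd, h⟩
          rw [Finset.card_eq_zero]
          ext x
          simp only [mem_sdiff, SimpleGraph.mem_neighborFinset, notMem_empty, iff_false]
          rintro ⟨hadj, hxD⟩
          have hxin : x ∈ insert v D' := hZnbr d hdZ
            ((SimpleGraph.mem_neighborFinset _ _ _).mpr hadj)
          rcases mem_insert.mp hxin with rfl | h'
          · have : d ∈ W := mem_filter.mpr ⟨hdZ, hadj.symm⟩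
            rw [hW] at this
            exact notMem_empty d this
          · exact hxD h'
        · refine Or.inr (le_trans h (Finset.card_le_card ?_))
          exact Finset.sdiff_subset_sdiff (Finset.Subset.refl _) (subset_insert _ _)
  · -- U.card = 0 or ≥ 2 : insert v D' works
    have hU0 : U.card = 0 ∨ 2 ≤ U.card := by omega
    refine ⟨insert v D', ⟨?_, ?_⟩, ?_⟩
    · intro x hxD
      have hxv : x ≠ v := fun h => hxD (h ▸ mem_insert_self _ _)
      have hxD' : x ∉ D' := fun h => hxD (mem_insert_of_mem h)
      obtain ⟨d, hd, hdx⟩ := hdom x hxv hxD'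
      exact ⟨d, mem_insert_of_mem hd, hdx⟩
    · intro d hd
      rcases mem_insert.mp hd with hdv | hd'
      · rw [hdv]
        have : G.neighborFinset v \ insert v D' = U := by
          ext x
          simp only [hUdef, mem_sdiff, SimpleGraph.mem_neighborFinset, mem_insert]
          constructor
          · rintro ⟨h1, h2⟩
            exact ⟨h1, fun hc => h2 (Or.inr hc)⟩
          · rintro ⟨h1, h2⟩
            exact ⟨h1, fun hc => hc.elim (fun h => (G.ne_of_adj h1) h.symm) h2⟩
        rw [this]
        omega
      · exact hcert d hd'
    · rw [Finset.card_insert_of_notMem hvD]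

end CertDel2

lemma isCertDomSet_univ (G' : SimpleGraph V) [DecidableRel G'.Adj] :
    IsCertDomSet G' (univ : Finset V) := by
  constructor
  · intro x hx
    exact absurd (mem_univ x) hx
  · intro x _
    refine Or.inl ?_
    rw [Finset.sdiff_eq_empty_iff_subset.mpr (subset_univ _)]
    rfl

theorem gammaCer_le_gammaCer_deleteVertex_add_one' (G : SimpleGraph V) [DecidableRel G.Adj]
    (v : V) (hv : G.degree v ≠ 1) :
    gammaCer G ≤ gammaCer (G.induce {w : V | w ≠ v}) + 1 := by
  classical
  have hne : {n | ∃ D : Finset {w : V | w ≠ v},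
      IsCertDomSet (G.induce {w : V | w ≠ v}) D ∧ D.card = n}.Nonempty :=
    ⟨(univ : Finset {w : V | w ≠ v}).card, univ, isCertDomSet_univ _, rfl⟩
  obtain ⟨Dsub, hDcert, hDcard⟩ := Nat.sInf_mem hne
  set D' : Finset V := Dsub.map (Function.Embedding.subtype _) with hD'def
  have hcard' : D'.card = gammaCer (G.induce {w : V | w ≠ v}) := by
    rw [hD'def, Finset.card_map]; exact hDcard
  have hmemD' : ∀ x : V, x ∈ D' ↔ ∃ hx : x ≠ v, (⟨x, hx⟩ : {w : V | w ≠ v}) ∈ Dsub := by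
    intro x
    rw [hD'def, Finset.mem_map]
    constructor
    · rintro ⟨⟨a, ha⟩, haD, rfl⟩
      exact ⟨ha, haD⟩
    · rintro ⟨hx, hxD⟩
      exact ⟨⟨x, hx⟩, hxD, rfl⟩
  have hvD : v ∉ D' := by
    rw [hmemD']
    rintro ⟨hx, _⟩
    exact hx rfl
  have hdom : ∀ x, x ≠ v → x ∉ D' → ∃ d ∈ D', G.Adj d x := by
    intro x hxv hxD
    have hxsub : (⟨x, hxv⟩ : {w : V | w ≠ v}) ∉ Dsub := by
      intro hc
      exact hxD ((hmemD' x).mpr ⟨hxv, hc⟩)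
    obtain ⟨u, hu, hadj⟩ := hDcert.1 _ hxsub
    refine ⟨u.val, (hmemD' u.val).mpr ⟨u.2, by simpa using hu⟩, ?_⟩
    exact hadj
  have hcert : ∀ d ∈ D', (G.neighborFinset d \ insert v D').card = 0 ∨
      2 ≤ (G.neighborFinset d \ insert v D').card := by
    intro d hd
    obtain ⟨hdv, hdsub⟩ := (hmemD' d).mp hd
    have hmapeq :
        ((G.induce {w : V | w ≠ v}).neighborFinset ⟨d, hdv⟩ \ Dsub).map
          (Function.Embedding.subtype _) = G.neighborFinset d \ insert v D' := by
      ext x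
      rw [Finset.mem_map, mem_sdiff, SimpleGraph.mem_neighborFinset, mem_insert]
      constructor
      · rintro ⟨⟨a, ha⟩, haD, rfl⟩
        rw [mem_sdiff, SimpleGraph.mem_neighborFinset] at haD
        refine ⟨haD.1, ?_⟩
        rintro (heq | hmem)
        · exact ha heq
        · exact haD.2 ((hmemD' a).mp hmem).2
      · rintro ⟨hadj, hnot⟩
        push_neg at hnot
        refine ⟨⟨x, hnot.1⟩, ?_, rfl⟩
        rw [mem_sdiff, SimpleGraph.mem_neighborFinset]
        refine ⟨hadj, ?_⟩
        intro hc
        exact hnot.2 ((hmemD' x).mpr ⟨hnot.1, hc⟩)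
    have hcards :
        ((G.induce {w : V | w ≠ v}).neighborFinset ⟨d, hdv⟩ \ Dsub).card =
          (G.neighborFinset d \ insert v D').card := by
      rw [← hmapeq, Finset.card_map]
    rw [← hcards]
    exact hDcert.2 _ hdsub
  obtain ⟨D, hD, hcard⟩ := CertDel2.build G v hv D' hvD hdom hcert
  have h1 : gammaCer G ≤ D.card := Nat.sInf_le ⟨D, hD, rfl⟩
  rw [← hcard']
  omega

theorem gammaCer_le_gammaCer_deleteVertex_add_one (G : SimpleGraph V) [DecidableRel G.Adj]
    (v : V) (hv : G.degree v ≠ 1) :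
    gammaCer G ≤ gammaCer (G.induce {w : V | w ≠ v}) + 1 := by
  exact gammaCer_le_gammaCer_deleteVertex_add_one' G v hv
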